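/- The integer symmetric matrices [[18, 2], [2, −2]] and [[20, 0], [0, −2]] are ℤ-congruent: there exists a 2×2 integer matrix P with det P = 1 or det P = −1 such that Pᵀ · [[18, 2], [2, −2]] · P = [[20, 0], [0, −2]]. Equivalently, the lattice Λ₁₀^{2,−2} (a genus-10 quasi-polarization together with a conic) is isomorphic to the lattice Λ₁₁^{0,−2} (a genus-11 quasi-polarization together with an orthogonal (−2)-class, i.e. a nodal K3 surface of genus 11). -/
import Mathlib

open Matrix

/-- The Gram matrices `[[18, 2], [2, −2]]` and `[[20, 0], [0, −2]]` are `ℤ`-congruent, i.e. the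
lattice `Λ₁₀^{2,−2}` (genus-10 quasi-polarization plus a conic) is isomorphic to the lattice
`Λ₁₁^{0,−2}` (genus-11 quasi-polarization plus an orthogonal `(−2)`-class). -/
theorem Lambda_ten_two_minus_two_congruent_Lambda_eleven_zero_minus_two :
    ∃ P : Matrix (Fin 2) (Fin 2) ℤ, (P.det = 1 ∨ P.det = -1) ∧
      Pᵀ * !![18, 2; 2, -2] * P = !![20, 0; 0, -2] := by
  refine ⟨!![1, 0; 1, 1], Or.inl ?_, ?_⟩ <;>
    simp [Matrix.det_fin_two, Matrix.mul_fin_two, Matrix.transpose] <;>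
    decide
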